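/- Let L be a finite-dimensional Lie algebra over a field of characteristic zero that decomposes as a direct sum of abelian subalgebras L = L_1 ⊕ ... ⊕ L_r satisfying [L_i, L_j] ⊆ L_j whenever i > j, and [L_r, L_r] = 0. Suppose moreover that for each pair i ≥ j there exists N with ad(L_i)^N (L_j) = 0 (meaning any N-fold iterated bracket with elements of L_i applied to an element of L_j vanishes). Then L is nilpotent. -/

import Mathlib

open Submodule

attribute [local instance 100] LieRing.ofAssociativeRing

/-- Power-addition for the submodule power. -/
theorem aux_pow_add_13 {k A : Type*} [CommSemiring k] [Semiring A] [Algebra k A]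
    (X : Submodule k A) (a b : ℕ) : X ^ (a + b) = X ^ a * X ^ b := by
  induction b with
  | zero => rw [Nat.add_zero, Submodule.pow_zero, mul_one]
  | succ b ih =>
      rw [← Nat.add_assoc, Submodule.pow_succ, Submodule.pow_succ, ih, mul_assoc]

/-- Combinatorial key lemma: if `G^N = ⊥`, `H^M = ⊥` and `G*H ≤ H*G ⊔ H`, then
`(G ⊔ H)^(N*M) = ⊥`. -/
theorem aux_two_13 {k A : Type*} [CommSemiring k] [Semiring A] [Algebra k A]
    (G H : Submodule k A) (N M : ℕ)
    (hG : G ^ N = ⊥) (hH : H ^ M = ⊥) (hc : G * H ≤ H * G ⊔ H) :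
    (G ⊔ H) ^ (N * M) = ⊥ := by
  have hpow_zero : ∀ X : Submodule k A, X ^ 0 = 1 := fun X => Submodule.pow_zero X
  have hpow_succ : ∀ (X : Submodule k A) (n : ℕ), X ^ (n + 1) = X ^ n * X :=
    fun X _ => Submodule.pow_succ X
  set D : Submodule k A := ⨆ c, G ^ c with hDdef
  have hGD : ∀ c, G ^ c ≤ D := fun c => le_iSup (fun c => G ^ c) c
  have h1D : (1 : Submodule k A) ≤ D := le_trans (le_of_eq (hpow_zero G).symm) (hGD 0)
  have hDG : D * G ≤ D := by
    rw [hDdef, Submodule.iSup_mul]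
    refine iSup_le fun c => ?_
    rw [← hpow_succ G c]
    exact hGD _
  have hDGc : ∀ c, D * G ^ c ≤ D := by
    intro c
    induction c with
    | zero => rw [hpow_zero, mul_one]
    | succ c ih =>
        rw [hpow_succ, ← mul_assoc]
        exact le_trans (mul_le_mul' ih le_rfl) hDG
  have hDD : D * D ≤ D := by
    have heq : D * D = ⨆ c, D * G ^ c := by
      nth_rewrite 2 [hDdef]
      rw [Submodule.mul_iSup]
    rw [heq]
    exact iSup_le hDGc
  have hGcH : ∀ c, G ^ c * H ≤ H * D := by
    intro c; induction c with
    | zero =>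
        rw [hpow_zero, one_mul]
        calc H = H * 1 := (mul_one H).symm
          _ ≤ H * D := mul_le_mul' le_rfl h1D
    | succ c ih =>
        rw [hpow_succ, mul_assoc]
        calc G ^ c * (G * H) ≤ G ^ c * (H * G ⊔ H) := mul_le_mul' le_rfl hc
          _ = G ^ c * (H * G) ⊔ G ^ c * H := Submodule.mul_sup _ _ _
          _ ≤ (G ^ c * H) * G ⊔ H * D := by
              rw [mul_assoc]
              exact sup_le le_sup_left (le_sup_of_le_right ih)
          _ ≤ (H * D) * G ⊔ H * D := sup_le
              (le_sup_of_le_left (mul_le_mul' ih le_rfl)) le_sup_right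
          _ ≤ H * D := by
              rw [mul_assoc]
              exact sup_le (mul_le_mul' le_rfl hDG) le_rfl
  have hDH : D * H ≤ H * D := by
    rw [hDdef, Submodule.iSup_mul]; exact iSup_le hGcH
  set J : Submodule k A := ⨆ b, H ^ (b + 1) * D with hJdef
  have hHD_J : H * D ≤ J := by
    have h0 : H ^ (0 + 1) * D = H * D := by rw [Nat.zero_add, Submodule.pow_one]
    exact le_trans (le_of_eq h0.symm) (le_iSup (fun b => H ^ (b + 1) * D) 0)
  have hJG : J * G ≤ J := by
    rw [hJdef, Submodule.iSup_mul]
    refine iSup_le fun b => ?_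
    rw [mul_assoc]
    exact le_trans (mul_le_mul' le_rfl hDG) (le_iSup (fun b => H ^ (b + 1) * D) b)
  have hJH : J * H ≤ J := by
    rw [hJdef, Submodule.iSup_mul]
    refine iSup_le fun b => ?_
    rw [mul_assoc]
    calc H ^ (b + 1) * (D * H) ≤ H ^ (b + 1) * (H * D) := mul_le_mul' le_rfl hDH
      _ = H ^ (b + 1 + 1) * D := by rw [← mul_assoc, ← hpow_succ]
      _ ≤ J := le_iSup (fun b => H ^ (b + 1) * D) (b + 1)
  have hJsup : J * (G ⊔ H) ≤ J := by
    rw [Submodule.mul_sup]; exact sup_le hJG hJH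
  have hC : ∀ n, D * (G ⊔ H) ^ n ≤ J ⊔ D * G ^ n := by
    intro n; induction n with
    | zero => exact le_sup_right
    | succ n ih =>
        rw [hpow_succ (G ⊔ H) n, ← mul_assoc]
        refine le_trans (mul_le_mul' ih le_rfl) ?_
        have e1 : (J ⊔ D * G ^ n) * (G ⊔ H) = J * (G ⊔ H) ⊔ D * G ^ n * (G ⊔ H) :=
          Submodule.sup_mul _ _ _
        have e2 : D * G ^ n * (G ⊔ H) = D * G ^ n * G ⊔ D * G ^ n * H :=
          Submodule.mul_sup _ _ _
        rw [e1, e2]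
        refine sup_le (le_sup_of_le_left hJsup) (sup_le ?_ ?_)
        · rw [mul_assoc, ← hpow_succ G n]
          exact le_sup_right
        · refine le_sup_of_le_left ?_
          rw [mul_assoc]
          calc D * (G ^ n * H) ≤ D * (H * D) := mul_le_mul' le_rfl (hGcH n)
            _ = (D * H) * D := by rw [mul_assoc]
            _ ≤ (H * D) * D := mul_le_mul' hDH le_rfl
            _ = H * (D * D) := by rw [mul_assoc]
            _ ≤ H * D := mul_le_mul' le_rfl hDD
            _ ≤ J := hHD_J
  have hDN : D * (G ⊔ H) ^ N ≤ J := by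
    have := hC N
    rwa [hG, Submodule.mul_bot, sup_bot_eq] at this
  have hB : ∀ l, (G ⊔ H) ^ (N * l) ≤ ⨆ b, H ^ (b + l) * D := by
    intro l; induction l with
    | zero =>
        rw [Nat.mul_zero, hpow_zero]
        have h00 : H ^ (0 + 0) * D = D := by
          rw [Nat.add_zero, hpow_zero, one_mul]
        exact le_trans h1D (le_trans (le_of_eq h00.symm)
          (le_iSup (fun b => H ^ (b + 0) * D) 0))
    | succ l ih =>
        have hmul : N * (l + 1) = N * l + N := by ring
        rw [hmul, aux_pow_add_13]
        calc (G ⊔ H) ^ (N * l) * (G ⊔ H) ^ N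
            ≤ (⨆ b, H ^ (b + l) * D) * (G ⊔ H) ^ N := mul_le_mul' ih le_rfl
          _ = ⨆ b, H ^ (b + l) * D * (G ⊔ H) ^ N := Submodule.iSup_mul _ _
          _ ≤ ⨆ b, H ^ (b + (l + 1)) * D := by
              refine iSup_le fun b => ?_
              rw [mul_assoc]
              calc H ^ (b + l) * (D * (G ⊔ H) ^ N)
                  ≤ H ^ (b + l) * J := mul_le_mul' le_rfl hDN
                _ = ⨆ b', H ^ (b + l) * (H ^ (b' + 1) * D) := by
                    rw [hJdef, Submodule.mul_iSup]
                _ ≤ ⨆ b'', H ^ (b'' + (l + 1)) * D := by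
                    refine iSup_le fun b' => ?_
                    have hexp : H ^ (b + l) * (H ^ (b' + 1) * D)
                        = H ^ ((b + b') + (l + 1)) * D := by
                      rw [← mul_assoc, ← aux_pow_add_13]
                      have : b + l + (b' + 1) = b + b' + (l + 1) := by ring
                      rw [this]
                    rw [hexp]
                    exact le_iSup (fun b'' => H ^ (b'' + (l + 1)) * D) (b + b')
  have hfinal : (G ⊔ H) ^ (N * M) ≤ ⊥ := by
    refine le_trans (hB M) (iSup_le fun b => ?_)
    have hHb : H ^ (b + M) = ⊥ := by
      rw [aux_pow_add_13, hH, Submodule.mul_bot]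
    rw [hHb, Submodule.bot_mul]
  exact le_bot_iff.mp hfinal

/-- Iterated bracket, matching the `Nat.rec` expression in the main statement. -/
def brk13 {L : Type*} [LieRing L] (g : ℕ → L) (y : L) (n : ℕ) : L :=
  Nat.rec (motive := fun _ => L) y (fun m acc => ⁅g m, acc⁆) n

theorem brk13_shift {L : Type*} [LieRing L] (g : ℕ → L) (y : L) :
    ∀ n, brk13 g y (n + 1) = brk13 (fun m => g (m + 1)) ⁅g 0, y⁆ n := by
  intro n; induction n with
  | zero => rfl
  | succ n ih =>
      show ⁅g (n + 1), brk13 g y (n + 1)⁆ = _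
      rw [ih]; rfl

/-- If all sufficiently long iterated brackets with entries from `P` kill every
element of each `Q j`, and the `Q j` span, then a power of the subspace
`ad(P) ⊆ End(L)` vanishes. -/
theorem aux_class_13 {k L : Type*} [CommRing k] [LieRing L] [LieAlgebra k L]
    {ι : Type*} [Fintype ι]
    (P : Submodule k L) (Q : ι → Submodule k L) (hQ : (⨆ j, Q j) = ⊤)
    (hN : ∀ j, ∃ N : ℕ, ∀ (g : ℕ → L), (∀ n, g n ∈ P) → ∀ y ∈ Q j, brk13 g y N = 0) :
    ∃ N : ℕ, 1 ≤ N ∧ (Submodule.map (LieAlgebra.ad k L).toLinearMap P) ^ N = ⊥ := by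
  classical
  choose Nf hNf using hN
  set B : ℕ := Finset.univ.sup Nf with hBdef
  refine ⟨B + 1, Nat.le_add_left 1 B, ?_⟩
  set ad' : L →ₗ[k] Module.End k L := (LieAlgebra.ad k L).toLinearMap with had'
  -- the submodule of elements killed by all words of length `n` in `ad(P)`
  set W : ℕ → Submodule k L :=
    fun n => Nat.rec (⊥ : Submodule k L)
      (fun _ Wn => ⨅ (a : L) (_ : a ∈ P), Wn.comap (ad' a)) n with hWdef
  have hWsucc : ∀ n (y : L), y ∈ W (n + 1) ↔ ∀ a ∈ P, ⁅a, y⁆ ∈ W n := by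
    intro n y
    show y ∈ ⨅ (a : L) (_ : a ∈ P), (W n).comap (ad' a) ↔ _
    simp only [Submodule.mem_iInf, Submodule.mem_comap]
    constructor
    · intro h a ha
      have := h a ha
      simpa [had', LieAlgebra.ad_apply] using this
    · intro h a ha
      have := h a ha
      simpa [had', LieAlgebra.ad_apply] using this
  have hWmono : Monotone W := by
    apply monotone_nat_of_le_succ
    intro n
    induction n with
    | zero => exact bot_le
    | succ n ih =>
        intro y hy
        exact (hWsucc (n + 1) y).mpr fun a ha => ih ((hWsucc n y).mp hy a ha)
  have hW0 : W 0 = (⊥ : Submodule k L) := rfl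
  have hmem : ∀ n (y : L), (∀ g : ℕ → L, (∀ m, g m ∈ P) → brk13 g y n = 0) → y ∈ W n := by
    intro n
    induction n with
    | zero =>
        intro y h
        have hy0 : y = 0 := h (fun _ => 0) (fun _ => P.zero_mem)
        rw [hW0, Submodule.mem_bot]
        exact hy0
    | succ n ih =>
        intro y h
        refine (hWsucc n y).mpr ?_
        intro a ha
        refine ih _ ?_
        intro g hg
        have hmemg : ∀ m, (fun m => Nat.casesOn m a g) m ∈ P := by
          intro m; cases m with
          | zero => exact ha
          | succ m => exact hg m
        have := h (fun m => Nat.casesOn m a g) hmemg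
        rw [brk13_shift] at this
        exact this
  have htop : (⊤ : Submodule k L) ≤ W (B + 1) := by
    rw [← hQ]
    refine iSup_le fun j => ?_
    intro y hy
    refine hWmono (le_trans (Finset.le_sup (Finset.mem_univ j)) (Nat.le_succ B)) ?_
    exact hmem (Nf j) y (fun g hg => hNf j g hg y hy)
  have hc : ∀ c, ∀ T ∈ (Submodule.map ad' P) ^ c, ∀ y ∈ W c, T y = 0 := by
    intro c
    induction c with
    | zero =>
        intro T hT y hy
        rw [Submodule.pow_zero] at hT
        obtain ⟨s, rfl⟩ := Submodule.mem_one.mp hT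
        rw [hW0, Submodule.mem_bot] at hy
        subst hy
        simp
    | succ c ih =>
        intro T hT y hy
        rw [Submodule.pow_succ] at hT
        refine Submodule.mul_induction_on (C := fun T => T y = 0) hT ?_ ?_
        · intro m hm n hn
          obtain ⟨a, ha, rfl⟩ := hn
          have hbr : ⁅a, y⁆ ∈ W c := (hWsucc c y).mp hy a ha
          have heval : (m * ad' a) y = m ⁅a, y⁆ := by
            simp [Module.End.mul_apply, had', LieAlgebra.ad_apply]
          rw [heval]
          exact ih m hm _ hbr
        · intro T1 T2 h1 h2
          rw [LinearMap.add_apply, h1, h2, add_zero]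
  refine le_bot_iff.mp ?_
  intro T hT
  rw [Submodule.mem_bot]
  ext y
  rw [LinearMap.zero_apply]
  exact hc (B + 1) T hT y (htop trivial)

/-- Chaining `aux_two_13` over finitely many classes. -/
theorem aux_chain_13 {k A : Type*} [CommSemiring k] [Semiring A] [Algebra k A]
    (gg : ℕ → Submodule k A) (r : ℕ)
    (hbot : ∀ j, r ≤ j → gg j = ⊥)
    (hnil : ∀ m, ∃ N, 1 ≤ N ∧ gg m ^ N = ⊥)
    (hcomm : ∀ i j, j < i → gg i * gg j ≤ gg j * gg i ⊔ gg j) :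
    ∃ F, 1 ≤ F ∧ (⨆ j, gg j) ^ F = ⊥ := by
  set S : ℕ → Submodule k A :=
    fun m => Nat.rec (⊥ : Submodule k A) (fun t acc => gg t ⊔ acc) m with hSdef
  have hSsucc : ∀ m, S (m + 1) = gg m ⊔ S m := fun m => rfl
  have hle : ∀ m j, j < m → gg j ≤ S m := by
    intro m
    induction m with
    | zero => intro j hj; exact absurd hj (Nat.not_lt_zero j)
    | succ m ih =>
        intro j hj
        rw [hSsucc]
        rcases Nat.lt_succ_iff_lt_or_eq.mp hj with h | h
        · exact le_sup_of_le_right (ih j h)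
        · subst h; exact le_sup_left
  have hcommS : ∀ i m, m ≤ i → gg i * S m ≤ S m * gg i ⊔ S m := by
    intro i m
    induction m with
    | zero =>
        intro _
        have hS0 : S 0 = (⊥ : Submodule k A) := rfl
        rw [hS0, Submodule.mul_bot]
        exact bot_le
    | succ m ih =>
        intro hmi
        have hmi' : m ≤ i := Nat.le_of_succ_le hmi
        have hmlt : m < i := hmi
        rw [hSsucc, Submodule.mul_sup, Submodule.sup_mul]
        refine sup_le ?_ ?_
        · refine le_trans (hcomm i m hmlt) (sup_le ?_ ?_)
          · exact le_sup_of_le_left le_sup_left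
          · exact le_sup_of_le_right le_sup_left
        · refine le_trans (ih hmi') (sup_le ?_ ?_)
          · exact le_sup_of_le_left le_sup_right
          · exact le_sup_of_le_right le_sup_right
  have hmain : ∀ m, ∃ F, 1 ≤ F ∧ S m ^ F = ⊥ := by
    intro m
    induction m with
    | zero => exact ⟨1, le_rfl, by rw [Submodule.pow_one]; rfl⟩
    | succ m ih =>
        obtain ⟨M, hM1, hM⟩ := ih
        obtain ⟨N, hN1, hN⟩ := hnil m
        refine ⟨N * M, Nat.one_le_iff_ne_zero.mpr ?_, ?_⟩
        · exact Nat.mul_ne_zero (Nat.one_le_iff_ne_zero.mp hN1) (Nat.one_le_iff_ne_zero.mp hM1)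
        · rw [hSsucc]
          exact aux_two_13 (gg m) (S m) N M hN hM (hcommS m m le_rfl)
  obtain ⟨F, hF1, hF⟩ := hmain r
  refine ⟨F, hF1, ?_⟩
  have hSr : (⨆ j, gg j) = S r := by
    apply le_antisymm
    · refine iSup_le fun j => ?_
      rcases lt_or_ge j r with h | h
      · exact hle r j h
      · rw [hbot j h]; exact bot_le
    · have hup : ∀ m, S m ≤ ⨆ j, gg j := by
        intro m
        induction m with
        | zero => exact bot_le
        | succ m ih =>
            rw [hSsucc]
            exact sup_le (le_iSup gg m) ih
      exact hup r
  rw [hSr]; exact hF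

/-- Let `L` be a finite-dimensional Lie algebra over a field of characteristic zero
that is an internal direct sum of abelian subalgebras `L 0, …, L (r-1)` with
`[L i, L j] ⊆ L j` for `i > j`, and such that for every `i ≥ j` some power of
`ad` of elements of `L i` annihilates `L j`. Then `L` is nilpotent. -/
theorem stmt_13 {k L : Type*} [Field k] [CharZero k] [LieRing L] [LieAlgebra k L]
    [FiniteDimensional k L]
    (r : ℕ) (Lp : Fin r → LieSubalgebra k L)
    (hdirect : DirectSum.IsInternal (fun i => (Lp i).toSubmodule))
    (habel : ∀ i, ∀ x ∈ Lp i, ∀ y ∈ Lp i, ⁅x, y⁆ = 0)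
    (htri : ∀ i j : Fin r, j < i → ∀ x ∈ Lp i, ∀ y ∈ Lp j, ⁅x, y⁆ ∈ Lp j)
    (had : ∀ i j : Fin r, j ≤ i → ∃ N : ℕ, ∀ (g : ℕ → L), (∀ n, g n ∈ Lp i) →
      ∀ y ∈ Lp j,
        (Nat.rec (motive := fun _ => L) y (fun n acc => ⁅g n, acc⁆) N) = 0) :
    LieRing.IsNilpotent L := by
  classical
  set ad' : L →ₗ[k] Module.End k L := (LieAlgebra.ad k L).toLinearMap with had'
  set gg : ℕ → Submodule k (Module.End k L) :=
    fun m => if h : m < r then Submodule.map ad' (Lp ⟨m, h⟩).toSubmodule else ⊥ with hggdef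
  have hbot : ∀ j, r ≤ j → gg j = ⊥ := by
    intro j hj
    simp only [hggdef, dif_neg (Nat.not_lt.mpr hj)]
  have hggfin : ∀ i : Fin r, gg i.1 = Submodule.map ad' (Lp i).toSubmodule := by
    intro i
    simp only [hggdef, dif_pos i.isLt, Fin.eta]
  -- each class has a vanishing power
  have hnil : ∀ m, ∃ N, 1 ≤ N ∧ gg m ^ N = ⊥ := by
    intro m
    by_cases hm : m < r
    · set i : Fin r := ⟨m, hm⟩ with hidef
      have hQ : (⨆ j, (Lp j).toSubmodule) = ⊤ := hdirect.submodule_iSup_eq_top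
      have hN : ∀ j : Fin r, ∃ N : ℕ, ∀ (g : ℕ → L), (∀ n, g n ∈ (Lp i).toSubmodule) →
          ∀ y ∈ (Lp j).toSubmodule, brk13 g y N = 0 := by
        intro j
        rcases le_or_gt j i with hji | hij
        · obtain ⟨N, hNspec⟩ := had i j hji
          exact ⟨N, fun g hg y hy => hNspec g hg y hy⟩
        · refine ⟨2, fun g hg y hy => ?_⟩
          have h1 : ⁅g 0, y⁆ ∈ Lp i := by
            have h2 : ⁅y, g 0⁆ ∈ Lp i := htri j i hij y hy (g 0) (hg 0)
            have hskew : ⁅g 0, y⁆ = -⁅y, g 0⁆ := (lie_skew _ _).symm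
            rw [hskew]
            exact neg_mem h2
          show ⁅g 1, ⁅g 0, y⁆⁆ = 0
          exact habel i (g 1) (hg 1) _ h1
      obtain ⟨N, hN1, hNpow⟩ := aux_class_13 (Lp i).toSubmodule
        (fun j => (Lp j).toSubmodule) hQ hN
      refine ⟨N, hN1, ?_⟩
      have hgm : gg m = Submodule.map ad' (Lp i).toSubmodule := by
        simp only [hggdef, dif_pos hm]; rfl
      rw [hgm]
      exact hNpow
    · exact ⟨1, le_rfl, by rw [Submodule.pow_one, hbot m (Nat.not_lt.mp hm)]⟩
  -- commutation between classes
  have hcomm : ∀ i j, j < i → gg i * gg j ≤ gg j * gg i ⊔ gg j := by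
    intro i j hij
    by_cases hi : i < r
    · have hj : j < r := lt_trans hij hi
      set i' : Fin r := ⟨i, hi⟩
      set j' : Fin r := ⟨j, hj⟩
      have hgi : gg i = Submodule.map ad' (Lp i').toSubmodule := by
        simp only [hggdef, dif_pos hi]; rfl
      have hgj : gg j = Submodule.map ad' (Lp j').toSubmodule := by
        simp only [hggdef, dif_pos hj]; rfl
      rw [hgi, hgj]
      refine Submodule.mul_le.mpr ?_
      rintro x ⟨a, ha, rfl⟩ y ⟨b, hb, rfl⟩
      have hab : ⁅a, b⁆ ∈ Lp j' := htri i' j' hij a ha b hb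
      have hkey : ad' a * ad' b = ad' b * ad' a + ad' ⁅a, b⁆ := by
        have hlie : ad' ⁅a, b⁆ = ⁅ad' a, ad' b⁆ := by
          simp only [had', LieHom.coe_toLinearMap]
          exact LieHom.map_lie (LieAlgebra.ad k L) a b
        rw [hlie, Ring.lie_def]
        abel
      rw [hkey]
      refine Submodule.add_mem _ ?_ ?_
      · exact le_sup_left (α := Submodule k (Module.End k L))
          (Submodule.mul_mem_mul (Submodule.mem_map_of_mem hb) (Submodule.mem_map_of_mem ha))
      · exact le_sup_right (α := Submodule k (Module.End k L))
          (Submodule.mem_map_of_mem hab)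
    · have hgi : gg i = ⊥ := hbot i (Nat.not_lt.mp hi)
      rw [hgi, Submodule.bot_mul]
      exact bot_le
  obtain ⟨F, hF1, hFpow⟩ := aux_chain_13 gg r hbot hnil hcomm
  -- every `ad x` lies in the sup of the classes
  have hadmem : ∀ x : L, ad' x ∈ ⨆ j, gg j := by
    intro x
    have hx : x ∈ (⊤ : Submodule k L) := trivial
    rw [← hdirect.submodule_iSup_eq_top] at hx
    have hmap : ad' x ∈ Submodule.map ad' (⨆ j, (Lp j).toSubmodule) :=
      Submodule.mem_map_of_mem hx
    rw [Submodule.map_iSup] at hmap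
    have hle : (⨆ j : Fin r, Submodule.map ad' (Lp j).toSubmodule) ≤ ⨆ j, gg j := by
      refine iSup_le fun j => ?_
      rw [← hggfin j]
      exact le_iSup gg j.1
    exact hle hmap
  have key : ∀ x : L, IsNilpotent (LieAlgebra.ad k L x) := by
    intro x
    refine ⟨F, ?_⟩
    have hpow : (ad' x) ^ F ∈ (⨆ j, gg j) ^ F := Submodule.pow_mem_pow _ (hadmem x) F
    rw [hFpow] at hpow
    simpa [had'] using (Submodule.mem_bot _).mp hpow
  exact (LieAlgebra.isNilpotent_iff_forall (R := k)).mpr key
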